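/- Let H and E be real inner product spaces and ε : H → E a linear map, and let β ∈ (1/4, 1]. Then there exist constants k₀ > 0 and C > 0, depending only on β, with the following property. Let 0 < k < k₀, let j ≥ 2 be an integer, let u⁰, …, u^j ∈ H and p⁰, …, p^j ∈ E satisfy, for each i = 1, …, j−1 and every ψ ∈ H, ⟪(u^{i+1} − 2u^i + u^{i−1})/k², ψ⟫ + β⟪ε u^{i+1}, ε ψ⟫ = −(1 − 2β)⟪ε u^i − p^i, ε ψ⟫ − β⟪ε u^{i−1} − p^{i−1}, ε ψ⟫ + β⟪p^{i+1}, ε ψ⟫, and assume ‖p^i‖ ≤ P for all 0 ≤ i ≤ j and k Σ_{i=0}^{j−1} ‖(p^{i+1} − p^i)/k‖² ≤ R for some P, R ≥ 0. Then, writing ∂ₜx^i := (x^i − x^{i−1})/k, one has ‖∂ₜu^j‖² + k²‖ε ∂ₜu^j‖² + ‖ε u^j‖² ≤ C (‖∂ₜu¹‖² + k²‖ε ∂ₜu¹‖² + ‖ε u¹‖² + ‖ε u⁰‖² + P² + R + k Σ_{i=1}^{j−1} ‖ε u^i‖²). -/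

import Mathlib

open RealInnerProductSpace

private lemma coer_aux (β γ x y z : ℝ) (hβ : 1/4 < β) (hβ' : β ≤ 1) (hγ : γ = (β - 1/4)/2)
    (hx : 0 ≤ x) (hy : 0 ≤ y) (hz1 : -(x*y) ≤ z) (hz2 : z ≤ x*y) :
    γ * (x^2 - 2*z + y^2) + γ * x^2 + γ * y^2 ≤ β * (x^2 - 2*z + y^2) + z := by
  subst hγ
  rcases le_total β (3/4) with hb | hb
  · nlinarith [mul_nonneg (by linarith : (0:ℝ) ≤ 3/4 - β) (by linarith : 0 ≤ x*y + z),
      mul_nonneg (by linarith : (0:ℝ) ≤ β - 1/4) (mul_nonneg hx hy), sq_nonneg (x - y)]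
  · nlinarith [mul_nonneg (by linarith : (0:ℝ) ≤ β - 3/4) (by linarith : 0 ≤ x*y - z),
      mul_nonneg (by linarith : (0:ℝ) ≤ 1 - β) (mul_nonneg hx hy), sq_nonneg (x - y)]

private lemma young_a (g P x y T : ℝ) (hP : 0 ≤ P) (h1 : g * T ≤ g * (3*P*(x+y))) :
    g * T ≤ g^2/2 * x^2 + g^2 * y^2 + 7 * P^2 := by
  nlinarith [sq_nonneg (g*x - 3*P), sq_nonneg (g*y - 3*P/2), sq_nonneg P]

private lemma young_b (P x y T : ℝ) (h1 : -T ≤ 3*P*(x+y)) :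
    -T ≤ 9 * P^2 + x^2/2 + y^2/2 := by
  nlinarith [sq_nonneg (3*P - x), sq_nonneg (3*P - y)]

private lemma amgm (x y : ℝ) : x * y ≤ x^2/2 + y^2/2 := by nlinarith [sq_nonneg (x - y)]

set_option maxHeartbeats 1000000

private lemma young3 (d1 d2 d3 x y : ℝ) :
    (d1 + d2 + d3) * (x + y) ≤ (3/2) * (d1^2 + d2^2 + d3^2) + (x^2 + y^2) := by
  nlinarith [sq_nonneg (d1 + d2 + d3 - (x + y)), sq_nonneg (d1 - d2), sq_nonneg (d1 - d3),
    sq_nonneg (d2 - d3), sq_nonneg (x - y)]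

theorem stmt_15
    (β : ℝ) (hβ : 1 / 4 < β) (hβ' : β ≤ 1) :
    ∃ k₀ > (0 : ℝ), ∃ C > (0 : ℝ),
      ∀ (H E : Type) (_ : NormedAddCommGroup H) (_ : InnerProductSpace ℝ H)
        (_ : NormedAddCommGroup E) (_ : InnerProductSpace ℝ E)
        (ε : H →ₗ[ℝ] E) (k : ℝ), 0 < k → k < k₀ →
      ∀ (j : ℕ), 2 ≤ j →
      ∀ (u : ℕ → H) (p : ℕ → E) (P R : ℝ), 0 ≤ P → 0 ≤ R →
        (∀ i, 1 ≤ i → i ≤ j - 1 → ∀ ψ : H,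
          ⟪(k ^ 2)⁻¹ • (u (i + 1) - (2 : ℝ) • u i + u (i - 1)), ψ⟫
              + β * ⟪ε (u (i + 1)), ε ψ⟫
            = -(1 - 2 * β) * ⟪ε (u i) - p i, ε ψ⟫
              - β * ⟪ε (u (i - 1)) - p (i - 1), ε ψ⟫
              + β * ⟪p (i + 1), ε ψ⟫) →
        (∀ i ≤ j, ‖p i‖ ≤ P) →
        k * ∑ i ∈ Finset.range j, ‖k⁻¹ • (p (i + 1) - p i)‖ ^ 2 ≤ R →
        ‖k⁻¹ • (u j - u (j - 1))‖ ^ 2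
            + k ^ 2 * ‖ε (k⁻¹ • (u j - u (j - 1)))‖ ^ 2
            + ‖ε (u j)‖ ^ 2
          ≤ C * (‖k⁻¹ • (u 1 - u 0)‖ ^ 2
              + k ^ 2 * ‖ε (k⁻¹ • (u 1 - u 0))‖ ^ 2
              + ‖ε (u 1)‖ ^ 2 + ‖ε (u 0)‖ ^ 2 + P ^ 2 + R
              + k * ∑ i ∈ Finset.Icc 1 (j - 1), ‖ε (u i)‖ ^ 2) := by
  have hγ : (0:ℝ) < (β - 1/4)/2 := by linarith
  have hγ38 : (β - 1/4)/2 ≤ 3/8 := by linarith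
  refine ⟨1, one_pos, 30/((β - 1/4)/2)^2, div_pos (by norm_num) (pow_pos hγ 2), ?_⟩
  intro H E _i1 _i2 _i3 _i4 ε k hk hk1 j hj u p P R hP hR hscheme hpb hpd
  obtain ⟨n, rfl⟩ : ∃ n, j = n + 1 := ⟨j - 1, by omega⟩
  have hn : 1 ≤ n := by omega
  simp only [Nat.add_sub_cancel]
  set γ := (β - 1/4)/2 with hγdef
  have hk' : k ≠ 0 := hk.ne'
  set a : ℕ → E := fun m => ε (u m) with ha
  set v : ℕ → H := fun m => k⁻¹ • (u (m+1) - u m) with hv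
  set d : ℕ → ℝ := fun m => ‖k⁻¹ • (p (m+1) - p m)‖ with hd
  set qq : ℕ → E := fun m => (1 - 2*β) • p m + β • p (m+1) + β • p (m-1) with hqq
  set Eng : ℕ → ℝ := fun m => ‖v m‖^2 + β * ‖a (m+1) - a m‖^2 + ⟪a m, a (m+1)⟫ with hEng
  set Tt : ℕ → ℝ := fun m => ⟪qq m, a (m+1) + a m⟫ with hTt
  clear_value γ a v d qq Eng Tt
  have hdnn : ∀ i, (0:ℝ) ≤ d i := fun i => by simp only [hd]; exact norm_nonneg _
  have hannn : ∀ i, (0:ℝ) ≤ ‖a i‖^2 := fun i => sq_nonneg _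
  have hpd' : k * ∑ i ∈ Finset.range (n+1), d i ^ 2 ≤ R := by simpa [hd] using hpd
  -- key per-step energy identity
  have key : ∀ m, m < n → Eng (m+1) - Eng m = ⟪qq (m+1), a (m+2) - a m⟫ := by
    intro m hm
    have h := hscheme (m+1) (by omega) (by omega) (u (m+2) - u m)
    simp only [Nat.add_sub_cancel] at h
    simp only [hEng, hv, ha, hqq, Nat.add_sub_cancel, show m+1+1 = m+2 from rfl,
      map_sub, map_smul, map_add,
      inner_sub_left, inner_sub_right, inner_add_left, inner_add_right,
      real_inner_smul_left, real_inner_smul_right,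
      ← real_inner_self_eq_norm_sq, real_inner_comm] at h ⊢
    field_simp at h ⊢
    linear_combination h

  -- telescoping
  have teleE : Eng n - Eng 0 = ∑ m ∈ Finset.range n, ⟪qq (m+1), a (m+2) - a m⟫ := by
    rw [← Finset.sum_range_sub Eng n]
    exact Finset.sum_congr rfl fun m hm => key m (Finset.mem_range.mp hm)
  have dec : ∀ m : ℕ, ⟪qq (m+1), a (m+2) - a m⟫
      = (Tt (m+1) - Tt m) + ⟪qq m - qq (m+1), a (m+1) + a m⟫ := by
    intro m
    simp only [hTt, inner_sub_left, inner_sub_right, inner_add_right,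
      show m+1+1 = m+2 from rfl]
    ring
  have master : Eng n = Eng 0 + (Tt n - Tt 0)
      + ∑ m ∈ Finset.range n, ⟪qq m - qq (m+1), a (m+1) + a m⟫ := by
    have h1 : ∑ m ∈ Finset.range n, ⟪qq (m+1), a (m+2) - a m⟫
        = ∑ m ∈ Finset.range n, ((Tt (m+1) - Tt m) + ⟪qq m - qq (m+1), a (m+1) + a m⟫) :=
      Finset.sum_congr rfl fun m _ => dec m
    rw [Finset.sum_add_distrib, Finset.sum_range_sub Tt n] at h1
    rw [h1] at teleE
    linarith [teleE]

  have habs1 : |1 - 2*β| ≤ 1 := abs_le.mpr ⟨by linarith, by linarith⟩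
  have habsb : |β| ≤ 1 := abs_le.mpr ⟨by linarith, hβ'⟩
  have hqnorm : ∀ m, m ≤ n → ‖qq m‖ ≤ 3 * P := by
    intro m hm
    have h1 : ‖p m‖ ≤ P := hpb m (by omega)
    have h2 : ‖p (m+1)‖ ≤ P := hpb (m+1) (by omega)
    have h3 : ‖p (m-1)‖ ≤ P := hpb (m-1) (by omega)
    have b1 : ‖(1 - 2*β) • p m‖ ≤ ‖p m‖ := by
      rw [norm_smul, Real.norm_eq_abs]; exact mul_le_of_le_one_left (norm_nonneg _) habs1
    have b2 : ‖β • p (m+1)‖ ≤ ‖p (m+1)‖ := by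
      rw [norm_smul, Real.norm_eq_abs]; exact mul_le_of_le_one_left (norm_nonneg _) habsb
    have b3 : ‖β • p (m-1)‖ ≤ ‖p (m-1)‖ := by
      rw [norm_smul, Real.norm_eq_abs]; exact mul_le_of_le_one_left (norm_nonneg _) habsb
    calc ‖qq m‖ ≤ ‖(1 - 2*β) • p m‖ + ‖β • p (m+1)‖ + ‖β • p (m-1)‖ := by
          simp only [hqq]; exact norm_add₃_le
      _ ≤ 3 * P := by linarith
  have hdm : ∀ m : ℕ, ‖p (m+1) - p m‖ = k * d m := by
    intro m
    simp only [hd, norm_smul, Real.norm_eq_abs, abs_of_pos (inv_pos.mpr hk)]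
    field_simp
  have hpdiff : ∀ m : ℕ, ‖p m - p (m-1)‖ ≤ k * d (m-1) := by
    intro m
    match m with
    | 0 =>
      simp only [Nat.zero_sub, sub_self, norm_zero]
      exact mul_nonneg hk.le (hdnn 0)
    | (m+1) =>
      simp only [Nat.add_sub_cancel]
      rw [hdm m]
  have hΔq : ∀ m : ℕ, ‖qq m - qq (m+1)‖ ≤ k * d m + k * d (m+1) + k * d (m-1) := by
    intro m
    have e : qq m - qq (m+1) = (1 - 2*β) • (p m - p (m+1)) + β • (p (m+1) - p (m+2))
        + β • (p (m-1) - p m) := by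
      simp only [hqq, Nat.add_sub_cancel, show m+1+1 = m+2 from rfl]
      module
    have b1 : ‖(1 - 2*β) • (p m - p (m+1))‖ ≤ ‖p m - p (m+1)‖ := by
      rw [norm_smul, Real.norm_eq_abs]; exact mul_le_of_le_one_left (norm_nonneg _) habs1
    have b2 : ‖β • (p (m+1) - p (m+2))‖ ≤ ‖p (m+1) - p (m+2)‖ := by
      rw [norm_smul, Real.norm_eq_abs]; exact mul_le_of_le_one_left (norm_nonneg _) habsb
    have b3 : ‖β • (p (m-1) - p m)‖ ≤ ‖p (m-1) - p m‖ := by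
      rw [norm_smul, Real.norm_eq_abs]; exact mul_le_of_le_one_left (norm_nonneg _) habsb
    have c1 : ‖p m - p (m+1)‖ = k * d m := by rw [norm_sub_rev]; exact hdm m
    have c2 : ‖p (m+1) - p (m+2)‖ = k * d (m+1) := by rw [norm_sub_rev]; exact hdm (m+1)
    have c3 : ‖p (m-1) - p m‖ ≤ k * d (m-1) := by rw [norm_sub_rev]; exact hpdiff m
    calc ‖qq m - qq (m+1)‖ ≤ ‖(1 - 2*β) • (p m - p (m+1))‖ + ‖β • (p (m+1) - p (m+2))‖
          + ‖β • (p (m-1) - p m)‖ := by rw [e]; exact norm_add₃_le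
      _ ≤ k * d m + k * d (m+1) + k * d (m-1) := by linarith

  have hterm : ∀ m : ℕ, ⟪qq m - qq (m+1), a (m+1) + a m⟫
      ≤ (3*k/2) * (d m ^2 + d (m+1)^2 + d (m-1)^2) + k * (‖a (m+1)‖^2 + ‖a m‖^2) := by
    intro m
    have h4 : ⟪qq m - qq (m+1), a (m+1) + a m⟫ ≤ ‖qq m - qq (m+1)‖ * ‖a (m+1) + a m‖ :=
      real_inner_le_norm _ _
    have h2 := hΔq m
    have h3 : ‖a (m+1) + a m‖ ≤ ‖a (m+1)‖ + ‖a m‖ := norm_add_le _ _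
    have hA : ‖qq m - qq (m+1)‖ * ‖a (m+1) + a m‖
        ≤ (k * d m + k * d (m+1) + k * d (m-1)) * (‖a (m+1)‖ + ‖a m‖) :=
      mul_le_mul h2 h3 (norm_nonneg _)
        (by have := hdnn m; have := hdnn (m+1); have := hdnn (m-1); positivity)
    have hB' : k * ((d m + d (m+1) + d (m-1)) * (‖a (m+1)‖ + ‖a m‖))
        ≤ k * ((3/2) * (d m ^2 + d (m+1)^2 + d (m-1)^2) + (‖a (m+1)‖^2 + ‖a m‖^2)) :=
      mul_le_mul_of_nonneg_left (young3 _ _ _ _ _) hk.le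
    calc ⟪qq m - qq (m+1), a (m+1) + a m⟫
        ≤ (k * d m + k * d (m+1) + k * d (m-1)) * (‖a (m+1)‖ + ‖a m‖) := le_trans h4 hA
      _ = k * ((d m + d (m+1) + d (m-1)) * (‖a (m+1)‖ + ‖a m‖)) := by ring
      _ ≤ k * ((3/2) * (d m ^2 + d (m+1)^2 + d (m-1)^2) + (‖a (m+1)‖^2 + ‖a m‖^2)) := hB'
      _ = (3*k/2) * (d m ^2 + d (m+1)^2 + d (m-1)^2) + k * (‖a (m+1)‖^2 + ‖a m‖^2) := by ring
  have hsum0 : ∑ m ∈ Finset.range n, d m ^2 ≤ ∑ i ∈ Finset.range (n+1), d i ^2 :=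
    Finset.sum_le_sum_of_subset_of_nonneg (Finset.range_subset_range.mpr (by omega))
      (fun i _ _ => sq_nonneg _)
  have hsum1 : ∑ m ∈ Finset.range n, d (m+1) ^2 ≤ ∑ i ∈ Finset.range (n+1), d i ^2 := by
    have h := Finset.sum_range_succ' (fun i => d i ^2) n
    nlinarith [sq_nonneg (d 0)]
  have hsum2 : ∑ m ∈ Finset.range n, d (m-1) ^2 ≤ 2 * ∑ i ∈ Finset.range (n+1), d i ^2 := by
    obtain ⟨n', rfl⟩ : ∃ n', n = n' + 1 := ⟨n - 1, by omega⟩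
    rw [Finset.sum_range_succ' (fun m => d (m-1) ^2) n']
    simp only [Nat.add_sub_cancel, Nat.zero_sub]
    have h1 : ∑ i ∈ Finset.range n', d i ^2 ≤ ∑ i ∈ Finset.range (n'+1+1), d i ^2 :=
      Finset.sum_le_sum_of_subset_of_nonneg (Finset.range_subset_range.mpr (by omega))
        (fun i _ _ => sq_nonneg _)
    have h2 : d 0 ^2 ≤ ∑ i ∈ Finset.range (n'+1+1), d i ^2 :=
      Finset.single_le_sum (fun i _ => sq_nonneg (d i)) (by simp)
    linarith
  have hsuma1 : ∑ m ∈ Finset.range n, ‖a (m+1)‖^2 = ∑ i ∈ Finset.Icc 1 n, ‖a i‖^2 := by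
    rw [← Finset.Ico_add_one_right_eq_Icc, Finset.sum_Ico_eq_sum_range]
    simp only [Nat.add_sub_cancel]
    exact Finset.sum_congr rfl fun i _ => by rw [Nat.add_comm]
  have hsuma0 : ∑ m ∈ Finset.range n, ‖a m‖^2 ≤ ‖a 0‖^2 + ∑ i ∈ Finset.Icc 1 n, ‖a i‖^2 := by
    obtain ⟨n', hn'⟩ : ∃ n', n = n' + 1 := ⟨n - 1, by omega⟩
    rw [hn', Finset.sum_range_succ' (fun m => ‖a m‖^2) n']
    have h1 : ∑ i ∈ Finset.range n', ‖a (i+1)‖^2 ≤ ∑ i ∈ Finset.range (n'+1), ‖a (i+1)‖^2 :=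
      Finset.sum_le_sum_of_subset_of_nonneg (Finset.range_subset_range.mpr (by omega))
        (fun i _ _ => sq_nonneg _)
    have h2 : ∑ i ∈ Finset.range (n'+1), ‖a (i+1)‖^2 = ∑ i ∈ Finset.Icc 1 (n'+1), ‖a i‖^2 := by
      rw [← hn']; exact hsuma1
    linarith
  have hS : ∑ m ∈ Finset.range n, ⟪qq m - qq (m+1), a (m+1) + a m⟫
      ≤ 6 * R + k * ‖a 0‖^2 + 2 * (k * ∑ i ∈ Finset.Icc 1 n, ‖a i‖^2) := by
    have h1 : ∑ m ∈ Finset.range n, ⟪qq m - qq (m+1), a (m+1) + a m⟫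
        ≤ ∑ m ∈ Finset.range n, ((3*k/2) * (d m ^2 + d (m+1)^2 + d (m-1)^2)
            + k * (‖a (m+1)‖^2 + ‖a m‖^2)) :=
      Finset.sum_le_sum fun m _ => hterm m
    have h2 : ∑ m ∈ Finset.range n, ((3*k/2) * (d m ^2 + d (m+1)^2 + d (m-1)^2)
            + k * (‖a (m+1)‖^2 + ‖a m‖^2))
        = (3*k/2) * ((∑ m ∈ Finset.range n, d m ^2) + (∑ m ∈ Finset.range n, d (m+1) ^2)
            + (∑ m ∈ Finset.range n, d (m-1) ^2))
          + k * ((∑ m ∈ Finset.range n, ‖a (m+1)‖^2) + (∑ m ∈ Finset.range n, ‖a m‖^2)) := by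
      simp only [Finset.sum_add_distrib, ← Finset.mul_sum]
    have e0 : k * (∑ m ∈ Finset.range n, d m ^2) ≤ R :=
      le_trans (mul_le_mul_of_nonneg_left hsum0 hk.le) hpd'
    have e1 : k * (∑ m ∈ Finset.range n, d (m+1) ^2) ≤ R :=
      le_trans (mul_le_mul_of_nonneg_left hsum1 hk.le) hpd'
    have e2 : k * (∑ m ∈ Finset.range n, d (m-1) ^2) ≤ 2 * R := by
      have := mul_le_mul_of_nonneg_left hsum2 hk.le
      linarith [hpd', this]
    have e3 : k * (∑ m ∈ Finset.range n, ‖a (m+1)‖^2)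
        = k * ∑ i ∈ Finset.Icc 1 n, ‖a i‖^2 := by rw [hsuma1]
    have e4 : k * (∑ m ∈ Finset.range n, ‖a m‖^2)
        ≤ k * ‖a 0‖^2 + k * ∑ i ∈ Finset.Icc 1 n, ‖a i‖^2 := by
      have := mul_le_mul_of_nonneg_left hsuma0 hk.le
      linarith [this]
    calc ∑ m ∈ Finset.range n, ⟪qq m - qq (m+1), a (m+1) + a m⟫
        ≤ (3*k/2) * ((∑ m ∈ Finset.range n, d m ^2) + (∑ m ∈ Finset.range n, d (m+1) ^2)
            + (∑ m ∈ Finset.range n, d (m-1) ^2))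
          + k * ((∑ m ∈ Finset.range n, ‖a (m+1)‖^2) + (∑ m ∈ Finset.range n, ‖a m‖^2)) := by
          rw [← h2]; exact h1
      _ ≤ 6 * R + k * ‖a 0‖^2 + 2 * (k * ∑ i ∈ Finset.Icc 1 n, ‖a i‖^2) := by
          have x0 := mul_le_mul_of_nonneg_left hsum0 hk.le
          linarith [e0, e1, e2, e3, e4]

  have hkv : ∀ m : ℕ, ‖a (m+1) - a m‖^2 = k^2 * ‖ε (v m)‖^2 := by
    intro m
    have e : ε (v m) = k⁻¹ • (a (m+1) - a m) := by
      simp only [hv, ha, map_smul, map_sub]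
    rw [e, norm_smul, Real.norm_eq_abs, abs_of_pos (inv_pos.mpr hk), mul_pow]
    field_simp
  have hcoer : ‖v n‖^2 + γ * ‖a (n+1) - a n‖^2 + γ * ‖a (n+1)‖^2 + γ * ‖a n‖^2 ≤ Eng n := by
    have hid : ‖a (n+1) - a n‖^2 = ‖a (n+1)‖^2 - 2*⟪a n, a (n+1)⟫ + ‖a n‖^2 := by
      rw [norm_sub_sq_real, real_inner_comm]
    have hz := abs_real_inner_le_norm (a n) (a (n+1))
    rw [abs_le] at hz
    have hc := coer_aux β γ (‖a (n+1)‖) (‖a n‖) ⟪a n, a (n+1)⟫ hβ hβ' hγdef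
      (norm_nonneg _) (norm_nonneg _) (by nlinarith [hz.1]) (by nlinarith [hz.2])
    simp only [hEng]
    rw [hid]
    linarith [hc]
  have hTtγ : γ * Tt n ≤ γ^2/2 * ‖a (n+1)‖^2 + γ^2 * ‖a n‖^2 + 7 * P^2 := by
    have c1 : Tt n ≤ ‖qq n‖ * ‖a (n+1) + a n‖ := by
      simp only [hTt]; exact real_inner_le_norm _ _
    have h0 : Tt n ≤ 3*P*(‖a (n+1)‖ + ‖a n‖) :=
      le_trans c1 (mul_le_mul (hqnorm n le_rfl) (norm_add_le _ _) (norm_nonneg _) (by positivity))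
    exact young_a γ P _ _ _ hP (mul_le_mul_of_nonneg_left h0 hγ.le)
  have hTt0 : -Tt 0 ≤ 9 * P^2 + ‖a 1‖^2/2 + ‖a 0‖^2/2 := by
    have c1 : |Tt 0| ≤ ‖qq 0‖ * ‖a 1 + a 0‖ := by
      simp only [hTt, Nat.zero_add]; exact abs_real_inner_le_norm _ _
    have h0 : -Tt 0 ≤ 3*P*(‖a 1‖ + ‖a 0‖) := by
      have c2 : ‖qq 0‖ * ‖a 1 + a 0‖ ≤ (3*P) * (‖a 1‖ + ‖a 0‖) :=
        mul_le_mul (hqnorm 0 (by omega)) (norm_add_le _ _) (norm_nonneg _) (by positivity)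
      have := neg_abs_le (Tt 0)
      linarith [c1, c2]
    exact young_b P _ _ _ h0
  have hEng0b : Eng 0 ≤ ‖v 0‖^2 + k^2*‖ε (v 0)‖^2 + ‖a 0‖^2/2 + ‖a 1‖^2/2 := by
    have hβΔ : β * ‖a 1 - a 0‖^2 ≤ ‖a 1 - a 0‖^2 :=
      mul_le_of_le_one_left (sq_nonneg _) hβ'
    have hΔ0 : ‖a 1 - a 0‖^2 = k^2 * ‖ε (v 0)‖^2 := hkv 0
    have hz : ⟪a 0, a 1⟫ ≤ ‖a 0‖*‖a 1‖ := real_inner_le_norm _ _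
    have hxy := amgm (‖a 0‖) (‖a 1‖)
    simp only [hEng, Nat.zero_add]
    linarith [hβΔ, hΔ0, hz, hxy]
  have hka0 : k * ‖a 0‖^2 ≤ ‖a 0‖^2 := by
    have := mul_nonneg (by linarith : (0:ℝ) ≤ 1 - k) (sq_nonneg ‖a 0‖)
    nlinarith [this]
  have hco2 := mul_le_mul_of_nonneg_left hcoer hγ.le
  rw [hkv n] at hco2
  have hme : γ * Eng n = γ*Eng 0 + γ*Tt n - γ*Tt 0
      + γ*(∑ m ∈ Finset.range n, ⟪qq m - qq (m+1), a (m+1) + a m⟫) := by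
    rw [master]; ring
  have hg0 := mul_le_mul_of_nonneg_left hEng0b hγ.le
  have hgT0 := mul_le_mul_of_nonneg_left hTt0 hγ.le
  have hgS := mul_le_mul_of_nonneg_left hS hγ.le
  have hgka0 := mul_le_mul_of_nonneg_left hka0 hγ.le
  have hmain : γ*‖v n‖^2 + γ^2*(k^2*‖ε (v n)‖^2) + γ^2/2*‖a (n+1)‖^2
      ≤ γ*(‖v 0‖^2 + k^2*‖ε (v 0)‖^2 + ‖a 1‖^2 + 2*‖a 0‖^2 + 9*P^2 + 6*R
          + 2*(k * ∑ i ∈ Finset.Icc 1 n, ‖a i‖^2)) + 7*P^2 := by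
    have st1 : γ*‖v n‖^2 + γ^2*(k^2*‖ε (v n)‖^2) + γ^2*‖a (n+1)‖^2 + γ^2*‖a n‖^2
        ≤ γ*Eng 0 + γ*Tt n - γ*Tt 0
          + γ*(∑ m ∈ Finset.range n, ⟪qq m - qq (m+1), a (m+1) + a m⟫) := by
      linarith [hco2, hme]
    have c1 : γ*Tt n ≤ γ^2/2 * ‖a (n+1)‖^2 + γ^2 * ‖a n‖^2 + 7 * P^2 := hTtγ
    have c2 : γ * -Tt 0 ≤ γ*(9 * P^2 + ‖a 1‖^2/2 + ‖a 0‖^2/2) := hgT0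
    have c3 : γ*Eng 0 ≤ γ*(‖v 0‖^2 + k^2*‖ε (v 0)‖^2 + ‖a 0‖^2/2 + ‖a 1‖^2/2) := hg0
    have c4 : γ*(∑ m ∈ Finset.range n, ⟪qq m - qq (m+1), a (m+1) + a m⟫)
        ≤ γ*(6 * R + k * ‖a 0‖^2 + 2 * (k * ∑ i ∈ Finset.Icc 1 n, ‖a i‖^2)) := hgS
    have c5 : γ*(k * ‖a 0‖^2) ≤ γ*‖a 0‖^2 := hgka0
    linarith [st1, c1, c2, c3, c4, c5]
  have hpos1 : (0:ℝ) ≤ k * ∑ i ∈ Finset.Icc 1 n, ‖a i‖^2 := by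
    have : (0:ℝ) ≤ ∑ i ∈ Finset.Icc 1 n, ‖a i‖^2 :=
      Finset.sum_nonneg fun i _ => sq_nonneg _
    positivity
  have hfin : γ^2 * (‖v n‖^2 + k^2*‖ε (v n)‖^2 + ‖a (n+1)‖^2)
      ≤ 30 * (‖v 0‖^2 + k^2*‖ε (v 0)‖^2 + ‖a 1‖^2 + ‖a 0‖^2 + P^2 + R
          + k * ∑ i ∈ Finset.Icc 1 n, ‖a i‖^2) := by
    have t1 : γ*(γ*‖v n‖^2) ≤ 1*(γ*‖v n‖^2) :=
      mul_le_mul_of_nonneg_right (by linarith : γ ≤ 1) (by positivity)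
    have s1 : γ*‖v 0‖^2 ≤ (3/8)*‖v 0‖^2 := mul_le_mul_of_nonneg_right hγ38 (sq_nonneg _)
    have s2 : γ*(k^2*‖ε (v 0)‖^2) ≤ (3/8)*(k^2*‖ε (v 0)‖^2) :=
      mul_le_mul_of_nonneg_right hγ38 (by positivity)
    have s3 : γ*‖a 1‖^2 ≤ (3/8)*‖a 1‖^2 := mul_le_mul_of_nonneg_right hγ38 (sq_nonneg _)
    have s4 : γ*‖a 0‖^2 ≤ (3/8)*‖a 0‖^2 := mul_le_mul_of_nonneg_right hγ38 (sq_nonneg _)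
    have s5 : γ*P^2 ≤ (3/8)*P^2 := mul_le_mul_of_nonneg_right hγ38 (sq_nonneg _)
    have s6 : γ*R ≤ (3/8)*R := mul_le_mul_of_nonneg_right hγ38 hR
    have s7 : γ*(k * ∑ i ∈ Finset.Icc 1 n, ‖a i‖^2)
        ≤ (3/8)*(k * ∑ i ∈ Finset.Icc 1 n, ‖a i‖^2) :=
      mul_le_mul_of_nonneg_right hγ38 hpos1
    have nn1 : (0:ℝ) ≤ γ*‖v n‖^2 := by positivity
    have nn2 : (0:ℝ) ≤ γ^2*(k^2*‖ε (v n)‖^2) := by positivity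
    linarith [hmain, t1, s1, s2, s3, s4, s5, s6, s7, nn1, nn2, sq_nonneg P,
      sq_nonneg (‖v 0‖), sq_nonneg (‖a 1‖), sq_nonneg (‖a 0‖), hR, hpos1,
      mul_nonneg (sq_nonneg k) (sq_nonneg (‖ε (v 0)‖))]
  rw [div_mul_eq_mul_div, le_div_iff₀ (pow_pos hγ 2)]
  simp only [hv, ha, Nat.zero_add] at hfin
  linarith [hfin]
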